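/- Let S be a posemigroup and Q(S) the quantale of closed lower sets of S (fixpoints of the closure D ↦ D̄). The map τ: S → Q(S), τ(s) = s↓, is a closure-preserving posemigroup morphism with the universal property: for every quantale Q and every closure-preserving posemigroup morphism f: S → Q there exists a unique quantale morphism g: Q(S) → Q with g ∘ τ = f, given by g(D) = ⋁ f(D). -/

import Mathlib

open Pointwise

/-- The closure `D̄` of a subset of a posemigroup, with `b, c` ranging over `S¹`
(the four cases correspond to `b = c = 1`, `c = 1`, `b = 1`, and `b, c ∈ S`). -/
def pcl (S : Type*) [Semigroup S] [PartialOrder S] (D : Set S) : Set S :=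
  {x | ∀ a : S,
    ((∀ d ∈ D, d ≤ a) → x ≤ a) ∧
    (∀ b : S, (∀ d ∈ D, b * d ≤ a) → b * x ≤ a) ∧
    (∀ c : S, (∀ d ∈ D, d * c ≤ a) → x * c ≤ a) ∧
    (∀ b c : S, (∀ d ∈ D, b * d * c ≤ a) → b * x * c ≤ a)}

/-- A marked quantale structure on a posemigroup `S`: a marking (set of admissible
subsets) containing singletons and closed under translations by elements of `S¹`,
such that every admissible set has a join over which multiplication distributes. -/
structure MarkedQuantale (S : Type*) [Semigroup S] [PartialOrder S] : Type _ where
  mark : Set (Set S)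
  singleton_mem : ∀ a : S, {a} ∈ mark
  mul_left_mem : ∀ G ∈ mark, ∀ a : S, (a * ·) '' G ∈ mark
  mul_right_mem : ∀ G ∈ mark, ∀ b : S, (· * b) '' G ∈ mark
  mul_both_mem : ∀ G ∈ mark, ∀ a b : S, (fun x => a * x * b) '' G ∈ mark
  exists_lub : ∀ M ∈ mark, ∃ m : S, IsLUB M m
  lub_mul_left : ∀ M ∈ mark, ∀ m : S, IsLUB M m → ∀ a : S, IsLUB ((a * ·) '' M) (a * m)
  lub_mul_right : ∀ M ∈ mark, ∀ m : S, IsLUB M m → ∀ b : S, IsLUB ((· * b) '' M) (m * b)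
  lub_mul_both : ∀ M ∈ mark, ∀ m : S, IsLUB M m → ∀ a b : S,
    IsLUB ((fun x => a * x * b) '' M) (a * m * b)

/-- `D` is an `A`-ideal: a lower set closed under joins of its admissible subsets. -/
def IsAIdeal {S : Type*} [Semigroup S] [PartialOrder S] (A : Set (Set S)) (D : Set S) : Prop :=
  IsLowerSet D ∧ ∀ M ∈ A, M ⊆ D → ∀ m : S, IsLUB M m → m ∈ D


section Lemmas
variable {S : Type*} [Semigroup S] [PartialOrder S]

lemma subset_pcl (D : Set S) : D ⊆ pcl S D := by
  intro x hx a
  exact ⟨fun h => h x hx, fun b h => h x hx, fun c h => h x hx, fun b c h => h x hx⟩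

lemma pcl_mono {D E : Set S} (h : D ⊆ E) : pcl S D ⊆ pcl S E := by
  intro x hx a
  obtain ⟨h1, h2, h3, h4⟩ := hx a
  exact ⟨fun hd => h1 fun d hd' => hd d (h hd'),
    fun b hd => h2 b fun d hd' => hd d (h hd'),
    fun c hd => h3 c fun d hd' => hd d (h hd'),
    fun b c hd => h4 b c fun d hd' => hd d (h hd')⟩

lemma pcl_pcl (D : Set S) : pcl S (pcl S D) = pcl S D := by
  refine Set.Subset.antisymm ?_ (subset_pcl _)
  intro x hx a
  obtain ⟨h1, h2, h3, h4⟩ := hx a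
  refine ⟨fun hd => h1 fun e he => (he a).1 hd,
    fun b hd => h2 b fun e he => (he a).2.1 b hd,
    fun c hd => h3 c fun e he => (he a).2.2.1 c hd,
    fun b c hd => h4 b c fun e he => (he a).2.2.2 b c hd⟩

variable [CovariantClass S S (· * ·) (· ≤ ·)]
  [CovariantClass S S (Function.swap (· * ·)) (· ≤ ·)]

lemma isLowerSet_pcl (D : Set S) : IsLowerSet (pcl S D) := by
  intro x y hyx hx a
  obtain ⟨h1, h2, h3, h4⟩ := hx a
  exact ⟨fun hd => le_trans hyx (h1 hd),
    fun b hd => le_trans (mul_le_mul_right hyx b) (h2 b hd),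
    fun c hd => le_trans (mul_le_mul_left hyx c) (h3 c hd),
    fun b c hd => le_trans (mul_le_mul_left (mul_le_mul_right hyx b) c) (h4 b c hd)⟩

lemma pcl_Iic (s : S) : pcl S (Set.Iic s) = Set.Iic s := by
  refine Set.Subset.antisymm ?_ (subset_pcl _)
  intro x hx
  exact (hx s).1 fun d hd => hd

lemma pcl_lowerClosure (D : Set S) : pcl S ↑(lowerClosure D) = pcl S D := by
  refine Set.Subset.antisymm ?_ (pcl_mono (subset_lowerClosure (α := S)))
  intro x hx a
  obtain ⟨h1, h2, h3, h4⟩ := hx a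
  refine ⟨fun hd => h1 ?_, fun b hd => h2 b ?_, fun c hd => h3 c ?_, fun b c hd => h4 b c ?_⟩
  · rintro d ⟨e, he, hde⟩; exact le_trans hde (hd e he)
  · rintro d ⟨e, he, hde⟩; exact le_trans (mul_le_mul_right hde b) (hd e he)
  · rintro d ⟨e, he, hde⟩; exact le_trans (mul_le_mul_left hde c) (hd e he)
  · rintro d ⟨e, he, hde⟩;
    exact le_trans (mul_le_mul_left (mul_le_mul_right hde b) c) (hd e he)

end Lemmas

section QuantaleLemmas

variable {Q : Type*} [Semigroup Q] [CompleteLattice Q] [IsQuantale Q]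

lemma qmul_le_left (a : Q) {x y : Q} (h : x ≤ y) : a * x ≤ a * y := by
  have h1 : a * x ≤ a * sSup {x, y} := by
    rw [mul_sSup_distrib]
    exact le_biSup (fun y => a * y) (Set.mem_insert x {y})
  rwa [sSup_pair, sup_eq_right.2 h] at h1

lemma qmul_le_right (a : Q) {x y : Q} (h : x ≤ y) : x * a ≤ y * a := by
  have h1 : x * a ≤ sSup {x, y} * a := by
    rw [sSup_mul_distrib]
    exact le_biSup (fun y => y * a) (Set.mem_insert x {y})
  rwa [sSup_pair, sup_eq_right.2 h] at h1

lemma pcl_quantale (D : Set Q) : pcl Q D = Set.Iic (sSup D) := by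
  ext x
  constructor
  · intro hx
    exact (hx (sSup D)).1 fun d hd => le_sSup hd
  · intro hx a
    have key : ∀ h : (∀ d ∈ D, d ≤ a), sSup D ≤ a := fun h => sSup_le h
    refine ⟨fun h => le_trans hx (key h), fun b h => ?_, fun c h => ?_, fun b c h => ?_⟩
    · refine le_trans (qmul_le_left b hx) ?_
      rw [mul_sSup_distrib]; exact iSup₂_le h
    · refine le_trans (qmul_le_right c hx) ?_
      rw [sSup_mul_distrib]; exact iSup₂_le h
    · refine le_trans (qmul_le_right c (qmul_le_left b hx)) ?_
      rw [mul_sSup_distrib]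
      have : (⨆ y ∈ D, b * y) * c = ⨆ y ∈ D, b * y * c := by
        rw [← sSup_image, sSup_mul_distrib, iSup_image]
      rw [this]; exact iSup₂_le h
end QuantaleLemmas

/-- `τ : S → Q(S)`, `τ s = s↓`, is a closure-preserving posemigroup morphism into the
quantale `Q(S)` of closed lower sets, with the universal property: every
closure-preserving posemigroup morphism `f` from `S` into a quantale `Q` factors
uniquely through `τ` via a quantale morphism `g`, given by `g D = ⋁ f(D)`. -/
theorem stmt17 {S : Type*} [Semigroup S] [PartialOrder S]
    [CovariantClass S S (· * ·) (· ≤ ·)]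
    [CovariantClass S S (Function.swap (· * ·)) (· ≤ ·)] :
    ∃ τ : S → {D : Set S // IsLowerSet D ∧ pcl S D = D},
      (∀ s : S, (↑(τ s) : Set S) = Set.Iic s) ∧
      -- τ is a posemigroup morphism into Q(S)
      (Monotone τ) ∧
      (∀ a b : S,
        (↑(τ (a * b)) : Set S) =
          pcl S ↑(lowerClosure ((↑(τ a) : Set S) * (↑(τ b) : Set S)))) ∧
      -- τ is closure preserving: τ((M↓)̄) ⊆ (⋁ τ(M))↓ in Q(S)
      (∀ M : Set S, ∀ x ∈ pcl S ↑(lowerClosure M),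
        (↑(τ x) : Set S) ⊆ pcl S (⋃ m ∈ M, Set.Iic m)) ∧
      -- universal property
      (∀ (Q : Type*) [Semigroup Q] [CompleteLattice Q] [IsQuantale Q],
        ∀ f : S → Q, Monotone f → (∀ a b : S, f (a * b) = f a * f b) →
        (∀ M : Set S, f '' pcl S ↑(lowerClosure M) ⊆ pcl Q ↑(lowerClosure (f '' M))) →
        ∃! g : {D : Set S // IsLowerSet D ∧ pcl S D = D} → Q,
          (∀ D E P : {D : Set S // IsLowerSet D ∧ pcl S D = D},
            (↑P : Set S) = pcl S ↑(lowerClosure ((↑D : Set S) * (↑E : Set S))) →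
            g P = g D * g E) ∧
          (∀ (F : Set {D : Set S // IsLowerSet D ∧ pcl S D = D})
              (L : {D : Set S // IsLowerSet D ∧ pcl S D = D}),
            IsLUB F L → g L = ⨆ D ∈ F, g D) ∧
          (∀ s : S, g (τ s) = f s) ∧
          (∀ D : {D : Set S // IsLowerSet D ∧ pcl S D = D},
            g D = sSup (f '' (↑D : Set S)))) := by
  refine ⟨fun s => ⟨Set.Iic s, isLowerSet_Iic s, pcl_Iic s⟩, fun s => rfl, ?_, ?_, ?_, ?_⟩
  · -- monotone
    intro s t hst
    exact Set.Iic_subset_Iic.2 hst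
  · -- multiplicative
    intro a b
    show Set.Iic (a * b) = pcl S ↑(lowerClosure (Set.Iic a * Set.Iic b))
    have h1 : (↑(lowerClosure (Set.Iic a * Set.Iic b)) : Set S) ⊆ Set.Iic (a * b) := by
      rintro x ⟨y, ⟨u, hu, v, hv, rfl⟩, hxy⟩
      exact le_trans hxy (mul_le_mul' hu hv)
    refine Set.Subset.antisymm ?_ (by rw [← pcl_Iic (a * b)]; exact pcl_mono h1)
    have hab : a * b ∈ pcl S ↑(lowerClosure (Set.Iic a * Set.Iic b)) :=
      subset_pcl _ (subset_lowerClosure (Set.mul_mem_mul le_rfl le_rfl))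
    exact fun x hx => isLowerSet_pcl _ hx hab
  · -- closure preserving
    intro M x hx
    have hU : (⋃ m ∈ M, Set.Iic m) = (↑(lowerClosure M) : Set S) := by
      ext y; simp [lowerClosure, Set.mem_iUnion]; exact Iff.rfl
    show Set.Iic x ⊆ pcl S (⋃ m ∈ M, Set.Iic m)
    rw [hU]
    exact fun y hy => isLowerSet_pcl _ hy hx
  · -- universal property
    intro Q _ _ _ f hmono hmul hclose
    have star : ∀ (M : Set S) (x : S), x ∈ pcl S ↑(lowerClosure M) →
        f x ≤ sSup (f '' M) := by
      intro M x hx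
      have := hclose M ⟨x, hx, rfl⟩
      rw [pcl_quantale] at this
      refine le_trans this (sSup_le ?_)
      rintro y ⟨z, hz, hyz⟩
      exact le_trans hyz (le_sSup hz)
    refine ⟨fun D => sSup (f '' (↑D : Set S)), ⟨?_, ?_, ?_, fun D => rfl⟩, ?_⟩
    · -- multiplicative
      intro D E P hP
      have hDE : sSup (f '' ((↑D : Set S) * ↑E)) = sSup (f '' ↑D) * sSup (f '' ↑E) := by
        refine le_antisymm (sSup_le ?_) ?_
        · rintro y ⟨z, ⟨u, hu, v, hv, rfl⟩, rfl⟩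
          rw [hmul]
          exact le_trans (qmul_le_left (f u) (le_sSup (Set.mem_image_of_mem f hv)))
            (qmul_le_right (sSup (f '' (↑E : Set S))) (le_sSup (Set.mem_image_of_mem f hu)))
        · rw [sSup_mul_distrib]
          refine iSup₂_le ?_
          rintro y ⟨u, hu, rfl⟩
          rw [mul_sSup_distrib]
          refine iSup₂_le ?_
          rintro z ⟨v, hv, rfl⟩
          rw [← hmul]
          exact le_sSup ⟨u * v, Set.mul_mem_mul hu hv, rfl⟩
      show sSup (f '' (↑P : Set S)) = _
      rw [hP, ← hDE]
      refine le_antisymm (sSup_le ?_) (sSup_le_sSup (Set.image_mono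
        (le_trans subset_lowerClosure (subset_pcl _))))
      rintro y ⟨x, hx, rfl⟩
      exact star _ x hx
    · -- joins
      intro F L hL
      refine le_antisymm ?_ (iSup₂_le fun D hD => sSup_le_sSup (Set.image_mono (hL.1 hD)))
      set U : Set S := ⋃ D ∈ F, (↑D : Set S) with hUdef
      have hUlow : IsLowerSet U := isLowerSet_iUnion₂ fun D _ => D.2.1
      have hUcl : (↑(lowerClosure U) : Set S) = U := by
        exact hUlow.lowerClosure
      have hub : L ≤ ⟨pcl S U, isLowerSet_pcl U, pcl_pcl U⟩ := by
        apply hL.2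
        intro D hD
        show (↑D : Set S) ⊆ pcl S U
        exact le_trans (Set.subset_biUnion_of_mem hD) (subset_pcl U)
      refine sSup_le ?_
      rintro y ⟨x, hx, rfl⟩
      have hxU : x ∈ pcl S ↑(lowerClosure U) := by rw [hUcl]; exact hub hx
      refine le_trans (star U x hxU) (sSup_le ?_)
      rintro y ⟨z, hz, rfl⟩
      obtain ⟨D, hDF, hzD⟩ := Set.mem_iUnion₂.1 hz
      calc f z ≤ sSup (f '' (↑D : Set S)) := le_sSup ⟨z, hzD, rfl⟩
        _ ≤ ⨆ E ∈ F, sSup (f '' (↑E : Set S)) :=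
          le_biSup (fun E : {D : Set S // IsLowerSet D ∧ pcl S D = D} =>
            sSup (f '' (↑E : Set S))) hDF
    · -- g ∘ τ = f
      intro s
      refine le_antisymm (sSup_le ?_) (le_sSup ⟨s, le_rfl, rfl⟩)
      rintro y ⟨x, hx, rfl⟩
      exact hmono hx
    · -- uniqueness
      rintro g' ⟨-, -, -, h4⟩
      funext D
      exact h4 D
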